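/- Let π = (n_1,…,n_m) (m ≥ 2) be a partition of n, 0 < ρ ≤ 1, and O, O' ∈ O(P_m) with O' weak equivalent to O via a chain O = O_0, O_1, …, O_r = O' in which every two adjacent terms are equivalent or shift-equivalent, and in which exactly d pairs of adjacent terms are shift-equivalent. If μ_{π,ρ} is a constant (depending only on π and ρ) such that ‖J‖₂ ≤ μ_{π,ρ} for all block Jacobi operators J ∈ J_O^{UBC_π(ρ)}, then for any d+1 block Jacobi operators J_1', J_2', …, J_{d+1}' ∈ J_{O'}^{UBC_π(ρ)} one has ‖J_1' J_2' ⋯ J_{d+1}'‖₂ ≤ μ_{π,ρ}, where ‖·‖₂ denotes the spectral norm. -/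

import Mathlib

namespace BlockJacobi

open scoped BigOperators

attribute [local instance] Classical.propDecidable

noncomputable section

/-- Offset (starting index) of block `r` for the partition `c`. -/
def off (c : ℕ → ℕ) (r : ℕ) : ℕ := ∑ k ∈ Finset.range r, c k

/-- `t` belongs to block `r`. -/
def inBlk (c : ℕ → ℕ) (r t : ℕ) : Prop := off c r ≤ t ∧ t < off c r + c r

/-- `s` and `t` belong to the same block (among the first `m` blocks). -/
def sameBlk (c : ℕ → ℕ) (m s t : ℕ) : Prop := ∃ r, r < m ∧ inBlk c r s ∧ inBlk c r t

/-- `t` belongs to the pivot zone: block `i` or block `j`. -/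
def inPiv (c : ℕ → ℕ) (i j t : ℕ) : Prop := inBlk c i t ∨ inBlk c j t

/-- `(c, m)` is a partition of `n` into `m` blocks (0-based blocks `0,…,m-1`). -/
def IsPartition (n m : ℕ) (c : ℕ → ℕ) : Prop :=
  2 ≤ m ∧ (∀ i < m, 1 ≤ c i) ∧ ∑ i ∈ Finset.range m, c i = n

/-- elementary block matrix with (0-based) pivot pair `(i,j)`. -/
def IsElem {n : ℕ} (c : ℕ → ℕ) (i j : ℕ) (U : Matrix (Fin n) (Fin n) ℝ) : Prop :=
  ∀ s t : Fin n, ¬(inPiv c i j (s : ℕ) ∧ inPiv c i j (t : ℕ)) →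
    U s t = if s = t then 1 else 0

/-- orthogonality. -/
def Orth {n : ℕ} (U : Matrix (Fin n) (Fin n) ℝ) : Prop := U.transpose * U = 1

/-- Euclidean norm of a vector. -/
def enorm {ι : Type*} [Fintype ι] (x : ι → ℝ) : ℝ := Real.sqrt (∑ i, x i ^ 2)

/-- smallest singular value of the `(r,r)` diagonal block of `U`. -/
def sigmaMinBlk {n : ℕ} (c : ℕ → ℕ) (r : ℕ) (U : Matrix (Fin n) (Fin n) ℝ) : ℝ :=
  sInf { v : ℝ | ∃ x : Fin n → ℝ,
    (∀ t : Fin n, ¬ inBlk c r (t : ℕ) → x t = 0) ∧ enorm x = 1 ∧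
    enorm (fun t : Fin n => if inBlk c r (t : ℕ) then U.mulVec x t else 0) = v }

/-- the constant `γ_{ij}` of the UBC class. -/
def gammaUBC (c : ℕ → ℕ) (i j : ℕ) : ℝ :=
  3 / Real.sqrt (((4 : ℝ) ^ c i + 6 * (c j : ℝ) - 1) * ((c j : ℝ) + 1))

/-- `U` is in the UBC class with pivot pair `(i,j)`: block structure given by `cs`,
`γ`-bound computed from the partition `cg`. -/
def IsUBC2 {n : ℕ} (cs cg : ℕ → ℕ) (ρ : ℝ) (i j : ℕ) (U : Matrix (Fin n) (Fin n) ℝ) : Prop :=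
  IsElem cs i j U ∧ Orth U ∧ sigmaMinBlk cs i U = sigmaMinBlk cs j U ∧
    ρ * gammaUBC cg i j ≤ sigmaMinBlk cs i U

/-- `U ∈ UBC_π(ρ)` with pivot pair `(i,j)`. -/
def IsUBC {n : ℕ} (c : ℕ → ℕ) (ρ : ℝ) (i j : ℕ) (U : Matrix (Fin n) (Fin n) ℝ) : Prop :=
  IsUBC2 c c ρ i j U

/-- the `(i,j)` pivot submatrix of `A` is diagonal. -/
def PivDiag {n : ℕ} (c : ℕ → ℕ) (i j : ℕ) (A : Matrix (Fin n) (Fin n) ℝ) : Prop :=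
  ∀ s t : Fin n, s ≠ t → inPiv c i j (s : ℕ) → inPiv c i j (t : ℕ) → A s t = 0

/-- square of the off-norm `S(A)`. -/
def offSq {n : ℕ} (A : Matrix (Fin n) (Fin n) ℝ) : ℝ :=
  ∑ s : Fin n, ∑ t : Fin n, if (s : ℕ) < (t : ℕ) then A s t ^ 2 else 0

/-- square of the off-norm of the `(i,j)` pivot submatrix of `A`. -/
def offSqPiv {n : ℕ} (c : ℕ → ℕ) (i j : ℕ) (A : Matrix (Fin n) (Fin n) ℝ) : ℝ :=
  ∑ s : Fin n, ∑ t : Fin n,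
    if (s : ℕ) < (t : ℕ) ∧ inPiv c i j (s : ℕ) ∧ inPiv c i j (t : ℕ) then A s t ^ 2 else 0

/-- Frobenius norm. -/
def frob {n : ℕ} (A : Matrix (Fin n) (Fin n) ℝ) : ℝ :=
  Real.sqrt (∑ s : Fin n, ∑ t : Fin n, A s t ^ 2)

/-- One sweep of the block Jacobi method along the pivot list `L`; block structure from
`cs`, UBC bound computed from the partition `cg`. -/
def Sweep2 {n : ℕ} (cs cg : ℕ → ℕ) (ρ : ℝ) (L : List (ℕ × ℕ))
    (A A' : Matrix (Fin n) (Fin n) ℝ) : Prop :=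
  ∃ B : ℕ → Matrix (Fin n) (Fin n) ℝ,
    B 0 = A ∧ B L.length = A' ∧
    ∀ (k : ℕ) (hk : k < L.length),
      ∃ U : Matrix (Fin n) (Fin n) ℝ,
        IsUBC2 cs cg ρ (L.get ⟨k, hk⟩).1 (L.get ⟨k, hk⟩).2 U ∧
        B (k + 1) = U.transpose * B k * U ∧
        PivDiag cs (L.get ⟨k, hk⟩).1 (L.get ⟨k, hk⟩).2 (B (k + 1))

/-- One sweep of the block Jacobi method with `UBC_π(ρ)` transformations. -/
def Sweep {n : ℕ} (c : ℕ → ℕ) (ρ : ℝ) (L : List (ℕ × ℕ))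
    (A A' : Matrix (Fin n) (Fin n) ℝ) : Prop :=
  Sweep2 c c ρ L A A'

/-- `L ∈ O(P_m)` (0-based pairs). -/
def SeqOn (m : ℕ) (L : List (ℕ × ℕ)) : Prop :=
  (∀ p ∈ L, p.1 < p.2 ∧ p.2 < m) ∧ ∀ i j : ℕ, i < j → j < m → (i, j) ∈ L

/-- `L ∈ O(S)` for `S ⊆ P_m`. -/
def SeqOnSet (S : Set (ℕ × ℕ)) (L : List (ℕ × ℕ)) : Prop :=
  (∀ p ∈ L, p ∈ S) ∧ ∀ p ∈ S, p ∈ L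

/-- the class `B_c^(m)` of column-wise orderings (0-based). -/
def memBc (m : ℕ) (L : List (ℕ × ℕ)) : Prop :=
  ∃ τ : ℕ → ℕ → ℕ,
    (∀ j, Set.BijOn (τ j) (Set.Iio j) (Set.Iio j)) ∧
    L = (List.range' 1 (m - 1)).flatMap fun j => (List.range j).map fun a => (τ j a, j)

/-- the class `B_r^(m)` of row-wise orderings (0-based). -/
def memBr (m : ℕ) (L : List (ℕ × ℕ)) : Prop :=
  ∃ σ : ℕ → ℕ → ℕ,
    (∀ i, Set.BijOn (σ i) (Set.Ico (i + 1) m) (Set.Ico (i + 1) m)) ∧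
    L = ((List.range (m - 1)).reverse).flatMap fun i =>
      (List.range' (i + 1) (m - 1 - i)).map fun b => (i, σ i b)

/-- the class `B_sp^(m)` of serial orderings with permutations. -/
def memBsp (m : ℕ) (L : List (ℕ × ℕ)) : Prop :=
  memBc m L ∨ memBc m L.reverse ∨ memBr m L ∨ memBr m L.reverse

/-- the quasi-cyclic class `B̄_c^(m)`. -/
def memBcQ (m : ℕ) (L : List (ℕ × ℕ)) : Prop :=
  ∃ (τ : ℕ → ℕ → ℕ) (E : ℕ → List (ℕ × ℕ)),
    (∀ j, Set.BijOn (τ j) (Set.Iio j) (Set.Iio j)) ∧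
    (∀ j, ∀ p ∈ E j, p.1 < p.2 ∧ p.2 ≤ j) ∧
    L = (List.range' 1 (m - 1)).flatMap fun j =>
      ((List.range j).map fun a => (τ j a, j)) ++ (if j = 1 then [] else E j)

/-- one admissible transposition (on lists of `α`'s carrying pairs via `pr`). -/
def AdjSwapG {α : Type*} (pr : α → ℕ × ℕ) (L L' : List α) : Prop :=
  ∃ (l₁ l₂ : List α) (a b : α),
    ({(pr a).1, (pr a).2} ∩ {(pr b).1, (pr b).2} : Set ℕ) = ∅ ∧
    L = l₁ ++ a :: b :: l₂ ∧ L' = l₁ ++ b :: a :: l₂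

/-- equivalence (finitely many admissible transpositions). -/
def EquivG {α : Type*} (pr : α → ℕ × ℕ) : List α → List α → Prop :=
  Relation.ReflTransGen (AdjSwapG pr)

/-- shift-equivalence. -/
def ShiftG {α : Type*} (L L' : List α) : Prop :=
  ∃ l₁ l₂ : List α, L = l₁ ++ l₂ ∧ L' = l₂ ++ l₁

/-- weak equivalence. -/
def WeakG {α : Type*} (pr : α → ℕ × ℕ) : List α → List α → Prop :=
  Relation.ReflTransGen fun X Y => EquivG pr X Y ∨ ShiftG X Y

/-- equivalence of pivot sequences. -/
def PEquivL : List (ℕ × ℕ) → List (ℕ × ℕ) → Prop := EquivG id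

/-- shift-equivalence of pivot sequences. -/
def ShiftEq : List (ℕ × ℕ) → List (ℕ × ℕ) → Prop := ShiftG

/-- weak equivalence of pivot sequences. -/
def WeakEq : List (ℕ × ℕ) → List (ℕ × ℕ) → Prop := WeakG id

/-- weak equivalence realized by a chain containing exactly `d` shift-equivalent
adjacent pairs (all other adjacent pairs being equivalent). -/
def WeakChainD (d : ℕ) (L L' : List (ℕ × ℕ)) : Prop :=
  ∃ (r : ℕ) (cs : ℕ → List (ℕ × ℕ)) (s : Finset ℕ),
    cs 0 = L ∧ cs r = L' ∧ s.card = d ∧ (∀ k ∈ s, k < r) ∧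
    ∀ k < r, if k ∈ s then ShiftEq (cs k) (cs (k + 1)) else PEquivL (cs k) (cs (k + 1))

/-- `q` is a permutation of `{0,…,m-1}`. -/
def IsPermOn (m : ℕ) (q : ℕ → ℕ) : Prop := Set.BijOn q (Set.Iio m) (Set.Iio m)

/-- `O(q)`: apply a permutation to all pairs of the sequence. -/
def pApply (q : ℕ → ℕ) (L : List (ℕ × ℕ)) : List (ℕ × ℕ) :=
  L.map fun p => if q p.1 < q p.2 then (q p.1, q p.2) else (q p.2, q p.1)

/-- `compSeq q t = q_t ∘ q_{t-1} ∘ ⋯ ∘ q_1`. -/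
def compSeq (q : ℕ → ℕ → ℕ) : ℕ → ℕ → ℕ
  | 0 => id
  | t + 1 => q (t + 1) ∘ compSeq q t

/-- the class `B_spg^(m)`. -/
def memBspg (m : ℕ) (L : List (ℕ × ℕ)) : Prop :=
  ∃ L' L'' : List (ℕ × ℕ), memBsp m L'' ∧
    ((∃ q, IsPermOn m q ∧ L' = pApply q L) ∧ PEquivL L' L'' ∨
      PEquivL L L' ∧ ∃ q, IsPermOn m q ∧ L'' = pApply q L')

/-- the class `B_sg^(m)` of generalized serial orderings. -/
def memBsg (m : ℕ) (L : List (ℕ × ℕ)) : Prop :=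
  ∃ L' L'' : List (ℕ × ℕ), memBsp m L'' ∧
    ((∃ q, IsPermOn m q ∧ L' = pApply q L) ∧ WeakEq L' L'' ∨
      WeakEq L L' ∧ ∃ q, IsPermOn m q ∧ L'' = pApply q L')

/-- index set of the entries of the off-diagonal blocks in the upper triangle;
it has cardinality `K`. -/
def OffI (n m : ℕ) (c : ℕ → ℕ) : Type :=
  { p : Fin n × Fin n // (p.1 : ℕ) < (p.2 : ℕ) ∧ ¬ sameBlk c m (p.1 : ℕ) (p.2 : ℕ) }

instance (n m : ℕ) (c : ℕ → ℕ) : Fintype (OffI n m c) := by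
  unfold OffI; exact Subtype.fintype _

instance (n m : ℕ) (c : ℕ → ℕ) : DecidableEq (OffI n m c) := Classical.decEq _

/-- `vec_{π,0}⁻¹` : the symmetric matrix with zero diagonal blocks built from a vector. -/
def symOf {n m : ℕ} {c : ℕ → ℕ} (a : OffI n m c → ℝ) : Matrix (Fin n) (Fin n) ℝ :=
  fun s t =>
    if h : (s : ℕ) < (t : ℕ) ∧ ¬ sameBlk c m (s : ℕ) (t : ℕ) then a ⟨(s, t), h⟩
    else if h' : (t : ℕ) < (s : ℕ) ∧ ¬ sameBlk c m (t : ℕ) (s : ℕ) then a ⟨(t, s), h'⟩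
    else 0

/-- `N_{ij}` : set the pivot submatrix to zero. -/
def nij {n : ℕ} (c : ℕ → ℕ) (i j : ℕ) (M : Matrix (Fin n) (Fin n) ℝ) :
    Matrix (Fin n) (Fin n) ℝ :=
  fun s t => if inPiv c i j (s : ℕ) ∧ inPiv c i j (t : ℕ) then 0 else M s t

/-- the block Jacobi annihilator `R_{ij}(Û)` (as a `K×K` matrix), parametrized by the
full elementary block matrix `U` with pivot pair `(i,j)` and pivot submatrix `Û`. -/
def annih (n m : ℕ) (c : ℕ → ℕ) (i j : ℕ) (U : Matrix (Fin n) (Fin n) ℝ) :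
    Matrix (OffI n m c) (OffI n m c) ℝ :=
  fun p q => nij c i j (U.transpose * symOf (Pi.single q (1 : ℝ)) * U) p.1.1 p.1.2

/-- the class `I_{ij}` of block Jacobi annihilators. -/
def Iij (n m : ℕ) (c : ℕ → ℕ) (i j : ℕ) : Set (Matrix (OffI n m c) (OffI n m c) ℝ) :=
  { R | ∃ U : Matrix (Fin n) (Fin n) ℝ, IsElem c i j U ∧ Orth U ∧ R = annih n m c i j U }

/-- the class `I_{ij}^{UBC(ρ)}`. -/
def IijUBC (n m : ℕ) (c : ℕ → ℕ) (ρ : ℝ) (i j : ℕ) :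
    Set (Matrix (OffI n m c) (OffI n m c) ℝ) :=
  { R | ∃ U : Matrix (Fin n) (Fin n) ℝ, IsUBC c ρ i j U ∧ R = annih n m c i j U }

/-- the class `J_O^{UBC_π(ρ)}` of block Jacobi operators. -/
def JopUBC (n m : ℕ) (c : ℕ → ℕ) (ρ : ℝ) (L : List (ℕ × ℕ)) :
    Set (Matrix (OffI n m c) (OffI n m c) ℝ) :=
  { J | ∃ R : ℕ → Matrix (OffI n m c) (OffI n m c) ℝ,
      (∀ (k : ℕ) (hk : k < L.length),
        R k ∈ IijUBC n m c ρ (L.get ⟨k, hk⟩).1 (L.get ⟨k, hk⟩).2) ∧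
      J = (((List.range L.length).reverse).map R).prod }

/-- spectral norm (operator 2-norm). -/
def specNorm {ι : Type*} [Fintype ι] (M : Matrix ι ι ℝ) : ℝ :=
  sSup { v : ℝ | ∃ x : ι → ℝ, enorm x = 1 ∧ enorm (M.mulVec x) = v }

/-- spectral radius. -/
def specRad {ι : Type*} [Fintype ι] (M : Matrix ι ι ℝ) : ℝ :=
  sSup { v : ℝ | ∃ (μ : ℂ) (x : ι → ℂ), x ≠ 0 ∧
    (M.map (fun r : ℝ => (r : ℂ))).mulVec x = μ • x ∧ v = ‖μ‖ }

/-- product `R_{T-1} ⋯ R_1 R_0` of a decorated pivot list. -/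
def prodD {n m : ℕ} {c : ℕ → ℕ}
    (L : List ((ℕ × ℕ) × Matrix (OffI n m c) (OffI n m c) ℝ)) :
    Matrix (OffI n m c) (OffI n m c) ℝ :=
  ((L.map Prod.snd).reverse).prod

/-- plane (Givens) rotation in the `(i,j)` coordinate plane. -/
def rotM (n : ℕ) (i j : ℕ) (φ : ℝ) : Matrix (Fin n) (Fin n) ℝ :=
  fun s t =>
    if (s : ℕ) = i ∧ (t : ℕ) = i then Real.cos φ
    else if (s : ℕ) = j ∧ (t : ℕ) = j then Real.cos φ
    else if (s : ℕ) = i ∧ (t : ℕ) = j then - Real.sin φ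
    else if (s : ℕ) = j ∧ (t : ℕ) = i then Real.sin φ
    else if s = t then 1 else 0

/-- One sweep of the scalar (element-wise) cyclic Jacobi method with rotation
angles in `[-π/4, π/4]`. -/
def ScalarSweep {n : ℕ} (L : List (ℕ × ℕ)) (A A' : Matrix (Fin n) (Fin n) ℝ) : Prop :=
  ∃ (B : ℕ → Matrix (Fin n) (Fin n) ℝ) (φ : ℕ → ℝ),
    B 0 = A ∧ B L.length = A' ∧
    ∀ (k : ℕ) (hk : k < L.length),
      |φ k| ≤ Real.pi / 4 ∧
      B (k + 1) =
        (rotM n (L.get ⟨k, hk⟩).1 (L.get ⟨k, hk⟩).2 (φ k)).transpose * B k *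
          rotM n (L.get ⟨k, hk⟩).1 (L.get ⟨k, hk⟩).2 (φ k) ∧
      ∀ s t : Fin n, (s : ℕ) = (L.get ⟨k, hk⟩).1 → (t : ℕ) = (L.get ⟨k, hk⟩).2 →
        B (k + 1) s t = 0

/-- `k` concatenated copies of a list. -/
def iterList {α : Type*} : ℕ → List α → List α
  | 0, _ => []
  | k + 1, L => L ++ iterList k L

section Aux

variable {ι : Type*} [Fintype ι]

lemma enorm_nonneg (x : ι → ℝ) : 0 ≤ enorm x := Real.sqrt_nonneg _

lemma enorm_sq (x : ι → ℝ) : enorm x ^ 2 = ∑ i, x i ^ 2 := by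
  rw [enorm, Real.sq_sqrt]
  exact Finset.sum_nonneg fun i _ => sq_nonneg _

lemma enorm_eq_zero {x : ι → ℝ} (h : enorm x = 0) : x = 0 := by
  have h2 : ∑ i, x i ^ 2 = 0 := by
    have := congrArg (· ^ 2) h
    simpa [enorm_sq] using this
  funext i
  have := (Finset.sum_eq_zero_iff_of_nonneg (fun i _ => sq_nonneg (x i))).1 h2 i (Finset.mem_univ i)
  exact pow_eq_zero_iff (n := 2) (by norm_num) |>.1 this

lemma enorm_smul (a : ℝ) (x : ι → ℝ) : enorm (a • x) = |a| * enorm x := by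
  simp only [enorm, Pi.smul_apply, smul_eq_mul, mul_pow, ← Finset.mul_sum]
  rw [Real.sqrt_mul (sq_nonneg a), Real.sqrt_sq_eq_abs]

lemma enorm_le_of_sq_le {x y : ι → ℝ} (h : ∑ i, x i ^ 2 ≤ ∑ i, y i ^ 2) :
    enorm x ≤ enorm y := Real.sqrt_le_sqrt h

/-- Frobenius-type bound for `mulVec`. -/
lemma enorm_mulVec_le (M : Matrix ι ι ℝ) (x : ι → ℝ) :
    enorm (M.mulVec x) ≤ Real.sqrt (∑ s, ∑ t, M s t ^ 2) * enorm x := by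
  have key : ∑ s, (M.mulVec x) s ^ 2 ≤ (∑ s, ∑ t, M s t ^ 2) * ∑ t, x t ^ 2 := by
    rw [Finset.sum_mul]
    refine Finset.sum_le_sum fun s _ => ?_
    simpa [Matrix.mulVec, dotProduct] using
      Finset.sum_mul_sq_le_sq_mul_sq Finset.univ (fun t => M s t) x
  calc enorm (M.mulVec x) ≤ Real.sqrt ((∑ s, ∑ t, M s t ^ 2) * ∑ t, x t ^ 2) :=
        Real.sqrt_le_sqrt key
    _ = Real.sqrt (∑ s, ∑ t, M s t ^ 2) * enorm x := by
        rw [Real.sqrt_mul (x := ∑ s, ∑ t, M s t ^ 2) (by positivity)]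
        rfl

lemma specNorm_bddAbove (M : Matrix ι ι ℝ) :
    BddAbove { v : ℝ | ∃ x : ι → ℝ, enorm x = 1 ∧ enorm (M.mulVec x) = v } := by
  refine ⟨Real.sqrt (∑ s, ∑ t, M s t ^ 2), ?_⟩
  rintro v ⟨x, hx, rfl⟩
  simpa [hx] using enorm_mulVec_le M x

lemma specNorm_nonneg (M : Matrix ι ι ℝ) : 0 ≤ specNorm M := by
  rcases Set.eq_empty_or_nonempty { v : ℝ | ∃ x : ι → ℝ, enorm x = 1 ∧ enorm (M.mulVec x) = v }
    with h | ⟨v, hv⟩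
  · rw [specNorm, h, Real.sSup_empty]
  · refine le_csSup_of_le (specNorm_bddAbove M) hv ?_
    rcases hv with ⟨x, hx, rfl⟩
    exact enorm_nonneg _

lemma enorm_mulVec_le_specNorm (M : Matrix ι ι ℝ) (y : ι → ℝ) :
    enorm (M.mulVec y) ≤ specNorm M * enorm y := by
  rcases eq_or_ne (enorm y) 0 with h | h
  · have : y = 0 := enorm_eq_zero h
    subst this
    simp [h, Matrix.mulVec_zero, show enorm (0 : ι → ℝ) = 0 by simp [enorm]]
  · have hy0 : 0 < enorm y := lt_of_le_of_ne (enorm_nonneg y) (Ne.symm h)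
    set x := (enorm y)⁻¹ • y with hx
    have hx1 : enorm x = 1 := by
      rw [hx, enorm_smul, abs_of_pos (inv_pos.2 hy0), inv_mul_cancel₀ (ne_of_gt hy0)]
    have hmem : enorm (M.mulVec x) ∈
        { v : ℝ | ∃ x : ι → ℝ, enorm x = 1 ∧ enorm (M.mulVec x) = v } := ⟨x, hx1, rfl⟩
    have hle : enorm (M.mulVec x) ≤ specNorm M := le_csSup (specNorm_bddAbove M) hmem
    have hMx : enorm (M.mulVec x) = (enorm y)⁻¹ * enorm (M.mulVec y) := by
      rw [hx, Matrix.mulVec_smul, enorm_smul, abs_of_pos (inv_pos.2 hy0)]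
    rw [hMx] at hle
    calc enorm (M.mulVec y) = (enorm y)⁻¹ * enorm (M.mulVec y) * enorm y := by
          field_simp
      _ ≤ specNorm M * enorm y := by
          exact mul_le_mul_of_nonneg_right hle (le_of_lt hy0)

lemma specNorm_le (M : Matrix ι ι ℝ) {a : ℝ} (ha : 0 ≤ a)
    (h : ∀ x : ι → ℝ, enorm x = 1 → enorm (M.mulVec x) ≤ a) : specNorm M ≤ a := by
  refine Real.sSup_le ?_ ha
  rintro v ⟨x, hx, rfl⟩
  exact h x hx

lemma specNorm_mul_le (M N : Matrix ι ι ℝ) :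
    specNorm (M * N) ≤ specNorm M * specNorm N := by
  refine specNorm_le _ (mul_nonneg (specNorm_nonneg M) (specNorm_nonneg N)) fun x hx => ?_
  rw [← Matrix.mulVec_mulVec]
  calc enorm (M.mulVec (N.mulVec x)) ≤ specNorm M * enorm (N.mulVec x) :=
        enorm_mulVec_le_specNorm M _
    _ ≤ specNorm M * (specNorm N * enorm x) :=
        mul_le_mul_of_nonneg_left (enorm_mulVec_le_specNorm N x) (specNorm_nonneg M)
    _ = specNorm M * specNorm N := by rw [hx, mul_one]

lemma specNorm_one_le : specNorm (1 : Matrix ι ι ℝ) ≤ 1 := by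
  refine specNorm_le _ zero_le_one fun x hx => ?_
  simp [Matrix.one_mulVec, hx]

/-- a product of matrices of spectral norm at most one has spectral norm at most one. -/
lemma specNorm_prod_le_one {Rs : List (Matrix ι ι ℝ)} (h : ∀ R ∈ Rs, specNorm R ≤ 1) :
    specNorm Rs.prod ≤ 1 := by
  induction Rs with
  | nil => simpa using specNorm_one_le
  | cons R Rs ih =>
      rw [List.prod_cons]
      calc specNorm (R * Rs.prod) ≤ specNorm R * specNorm Rs.prod := specNorm_mul_le _ _
        _ ≤ 1 * 1 :=
            mul_le_mul (h R (by simp)) (ih fun S hS => h S (by simp [hS]))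
              (specNorm_nonneg _) zero_le_one
        _ = 1 := by norm_num

end Aux

section Aux2

variable {n m : ℕ} {c : ℕ → ℕ}

lemma off_add_le (c : ℕ → ℕ) {r r' : ℕ} (h : r < r') : off c r + c r ≤ off c r' := by
  have : off c (r + 1) ≤ off c r' := by
    unfold off
    exact Finset.sum_le_sum_of_subset (Finset.range_subset_range.2 h)
  simpa [off, Finset.sum_range_succ] using this

lemma inBlk_disj {r r' t : ℕ} (hne : r ≠ r') (h : inBlk c r t) (h' : inBlk c r' t) : False := by
  rcases lt_or_gt_of_ne hne with hlt | hlt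
  · exact absurd (lt_of_lt_of_le h.2 (off_add_le c hlt)) (not_lt.2 h'.1)
  · exact absurd (lt_of_lt_of_le h'.2 (off_add_le c hlt)) (not_lt.2 h.1)

lemma inPiv_disj {i j k l t : ℕ}
    (hd : ({i, j} ∩ {k, l} : Set ℕ) = ∅)
    (h : inPiv c i j t) (h' : inPiv c k l t) : False := by
  have key : ∀ r r', r ∈ ({i, j} : Set ℕ) → r' ∈ ({k, l} : Set ℕ) → inBlk c r t →
      inBlk c r' t → False := by
    intro r r' hr hr' hb hb'
    rcases eq_or_ne r r' with rfl | hne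
    · exact absurd (Set.mem_inter hr hr') (by rw [hd]; exact Set.notMem_empty r)
    · exact inBlk_disj hne hb hb'
  rcases h with hb | hb <;> rcases h' with hb' | hb'
  · exact key i k (by simp) (by simp) hb hb'
  · exact key i l (by simp) (by simp) hb hb'
  · exact key j k (by simp) (by simp) hb hb'
  · exact key j l (by simp) (by simp) hb hb'

lemma sameBlk_symm {s t : ℕ} (h : sameBlk c m s t) : sameBlk c m t s := by
  obtain ⟨r, hr, h1, h2⟩ := h; exact ⟨r, hr, h2, h1⟩

lemma symOf_apply_fst (a : OffI n m c → ℝ) (p : OffI n m c) :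
    symOf a p.1.1 p.1.2 = a p := by
  rw [symOf, dif_pos p.2]
  exact congrArg a (Subtype.ext Prod.mk.eta)

lemma symOf_apply_snd (a : OffI n m c → ℝ) (p : OffI n m c) :
    symOf a p.1.2 p.1.1 = a p := by
  rw [symOf, dif_neg (by rintro ⟨hc, -⟩; exact absurd (lt_trans hc p.2.1) (lt_irrefl _)),
    dif_pos p.2]
  exact congrArg a (Subtype.ext Prod.mk.eta)

lemma symOf_symm (a : OffI n m c → ℝ) (s t : Fin n) : symOf a t s = symOf a s t := by
  unfold symOf
  by_cases hA : (s : ℕ) < (t : ℕ) ∧ ¬ sameBlk c m (s : ℕ) (t : ℕ)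
  · rw [dif_neg (by rintro ⟨hc, -⟩; omega), dif_pos hA, dif_pos hA]
  · by_cases hB : (t : ℕ) < (s : ℕ) ∧ ¬ sameBlk c m (t : ℕ) (s : ℕ)
    · rw [dif_pos hB, dif_neg hA, dif_pos hB]
    · rw [dif_neg hB, dif_neg hA, dif_neg hA, dif_neg hB]

lemma symOf_transpose (a : OffI n m c → ℝ) : (symOf a).transpose = symOf a := by
  ext s t
  rw [Matrix.transpose_apply]
  exact symOf_symm a s t

lemma symOf_eq_zero (a : OffI n m c → ℝ) {s t : Fin n}
    (h : ¬ (((s : ℕ) < (t : ℕ) ∧ ¬ sameBlk c m (s : ℕ) (t : ℕ)) ∨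
      ((t : ℕ) < (s : ℕ) ∧ ¬ sameBlk c m (t : ℕ) (s : ℕ)))) :
    symOf a s t = 0 := by
  rw [symOf, dif_neg (fun hc => h (Or.inl hc)), dif_neg (fun hc => h (Or.inr hc))]

lemma symOf_eq_sum (a : OffI n m c → ℝ) :
    symOf a = ∑ q : OffI n m c, a q • symOf (Pi.single q (1 : ℝ)) := by
  funext s t
  have hsum : (∑ q : OffI n m c, a q • symOf (Pi.single q (1 : ℝ))) s t
      = ∑ q : OffI n m c, a q * symOf (Pi.single q (1 : ℝ)) s t := by
    rw [Matrix.sum_apply]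
    rfl
  rw [hsum]
  by_cases h : (s : ℕ) < (t : ℕ) ∧ ¬ sameBlk c m (s : ℕ) (t : ℕ)
  · have hterm : ∀ q : OffI n m c, symOf (Pi.single q (1 : ℝ)) s t
        = if (⟨(s, t), h⟩ : OffI n m c) = q then (1 : ℝ) else 0 := by
      intro q
      rw [symOf, dif_pos h]; erw [Pi.single_apply]
      exact if_congr Iff.rfl rfl rfl
    have hL : symOf a s t = a ⟨(s, t), h⟩ := by rw [symOf, dif_pos h]
    rw [hL]
    have hterm2 : ∀ q : OffI n m c, a q * symOf (Pi.single q (1 : ℝ)) s t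
        = if (⟨(s, t), h⟩ : OffI n m c) = q then a q else 0 := by
      intro q
      rw [hterm q]
      split_ifs <;> simp
    rw [Finset.sum_congr rfl fun q _ => hterm2 q]
    refine ((Finset.sum_eq_single (⟨(s, t), h⟩ : OffI n m c)
      (fun b _ hb => if_neg (fun hc => hb hc.symm))
      (fun hk => absurd (Finset.mem_univ _) hk)).trans (if_pos rfl)).symm
  · by_cases h' : (t : ℕ) < (s : ℕ) ∧ ¬ sameBlk c m (t : ℕ) (s : ℕ)
    · have hterm : ∀ q : OffI n m c, symOf (Pi.single q (1 : ℝ)) s t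
          = if (⟨(t, s), h'⟩ : OffI n m c) = q then (1 : ℝ) else 0 := by
        intro q
        rw [symOf, dif_neg h, dif_pos h']; erw [Pi.single_apply]
        exact if_congr Iff.rfl rfl rfl
      have hL : symOf a s t = a ⟨(t, s), h'⟩ := by rw [symOf, dif_neg h, dif_pos h']
      rw [hL]
      have hterm2 : ∀ q : OffI n m c, a q * symOf (Pi.single q (1 : ℝ)) s t
          = if (⟨(t, s), h'⟩ : OffI n m c) = q then a q else 0 := by
        intro q
        rw [hterm q]
        split_ifs <;> simp
      rw [Finset.sum_congr rfl fun q _ => hterm2 q]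
      refine ((Finset.sum_eq_single (⟨(t, s), h'⟩ : OffI n m c)
        (fun b _ hb => if_neg (fun hc => hb hc.symm))
        (fun hk => absurd (Finset.mem_univ _) hk)).trans (if_pos rfl)).symm
    · have hL : symOf a s t = 0 := symOf_eq_zero a (by tauto)
      rw [hL]
      refine (Finset.sum_eq_zero fun q _ => ?_).symm
      rw [symOf_eq_zero (Pi.single q (1 : ℝ)) (by tauto), mul_zero]

lemma nij_apply (i j : ℕ) (M : Matrix (Fin n) (Fin n) ℝ) (s t : Fin n) :
    nij c i j M s t = if inPiv c i j (s : ℕ) ∧ inPiv c i j (t : ℕ) then 0 else M s t := rfl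

/-- `mulVec` of the annihilator, in closed form. -/
lemma mulVec_annih (i j : ℕ) (U : Matrix (Fin n) (Fin n) ℝ) (a : OffI n m c → ℝ) :
    (annih n m c i j U).mulVec a
      = fun p => nij c i j (U.transpose * symOf a * U) p.1.1 p.1.2 := by
  funext p
  have h1 : U.transpose * symOf a * U
      = ∑ q : OffI n m c, a q • (U.transpose * symOf (Pi.single q (1 : ℝ)) * U) := by
    rw [symOf_eq_sum a, Finset.mul_sum, Finset.sum_mul]
    refine Finset.sum_congr rfl fun q _ => ?_
    rw [Matrix.mul_smul, Matrix.smul_mul]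
  rw [h1]
  have h2 : nij c i j (∑ q : OffI n m c,
      a q • (U.transpose * symOf (Pi.single q (1 : ℝ)) * U)) p.1.1 p.1.2
      = ∑ q : OffI n m c,
        a q * nij c i j (U.transpose * symOf (Pi.single q (1 : ℝ)) * U) p.1.1 p.1.2 := by
    simp only [nij_apply]
    split_ifs with h
    · simp
    · rw [Matrix.sum_apply]
      rfl
  rw [h2]
  simp only [Matrix.mulVec, dotProduct, annih]
  exact Finset.sum_congr rfl fun q _ => mul_comm _ _

lemma f2_eq_trace (M : Matrix (Fin n) (Fin n) ℝ) :
    ∑ s : Fin n, ∑ t : Fin n, M s t ^ 2 = Matrix.trace (M.transpose * M) := by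
  rw [Matrix.trace, Finset.sum_comm]
  refine Finset.sum_congr rfl fun t _ => ?_
  simp [Matrix.diag, Matrix.mul_apply, Matrix.transpose_apply, sq]

lemma f2_conj {U : Matrix (Fin n) (Fin n) ℝ} (hU : Orth U) (S : Matrix (Fin n) (Fin n) ℝ) :
    ∑ s : Fin n, ∑ t : Fin n, (U.transpose * S * U) s t ^ 2
      = ∑ s : Fin n, ∑ t : Fin n, S s t ^ 2 := by
  have hUUT : U * U.transpose = 1 := mul_eq_one_comm.1 hU
  rw [f2_eq_trace, f2_eq_trace]
  have : (U.transpose * S * U).transpose * (U.transpose * S * U)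
      = U.transpose * (S.transpose * S) * U := by
    have h : (U.transpose * S * U).transpose
        = U.transpose * S.transpose * U := by
      rw [Matrix.transpose_mul, Matrix.transpose_mul, Matrix.transpose_transpose, mul_assoc]
    rw [h]
    calc U.transpose * S.transpose * U * (U.transpose * S * U)
        = U.transpose * S.transpose * (U * U.transpose) * (S * U) := by
          simp only [mul_assoc]
      _ = U.transpose * (S.transpose * S) * U := by
          rw [hUUT, mul_one]; simp only [mul_assoc]
  rw [this]
  calc Matrix.trace (U.transpose * (S.transpose * S) * U)
      = Matrix.trace (U * (U.transpose * (S.transpose * S))) := by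
        rw [Matrix.trace_mul_comm]
    _ = Matrix.trace (S.transpose * S) := by
        rw [← mul_assoc, hUUT, one_mul]

end Aux2

section Aux3

variable {n m : ℕ} {c : ℕ → ℕ}

lemma sum_offI_eq_filter (g : Fin n × Fin n → ℝ) :
    ∑ p : OffI n m c, g p.1
      = ∑ x ∈ Finset.univ.filter
          (fun x : Fin n × Fin n => (x.1 : ℕ) < (x.2 : ℕ) ∧ ¬ sameBlk c m (x.1 : ℕ) (x.2 : ℕ)),
        g x := by
  refine Finset.sum_bij (fun p _ => p.1) (fun p _ => ?_) (fun p _ q _ h => Subtype.ext h)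
    (fun x hx => ⟨⟨x, (Finset.mem_filter.1 hx).2⟩, Finset.mem_univ _, rfl⟩) (fun p _ => rfl)
  exact Finset.mem_filter.2 ⟨Finset.mem_univ _, p.2⟩

lemma sum_offI_eq_filter_swap (g : Fin n × Fin n → ℝ) :
    ∑ p : OffI n m c, g (p.1.2, p.1.1)
      = ∑ x ∈ Finset.univ.filter
          (fun x : Fin n × Fin n => (x.2 : ℕ) < (x.1 : ℕ) ∧ ¬ sameBlk c m (x.2 : ℕ) (x.1 : ℕ)),
        g x := by
  refine Finset.sum_bij (fun p _ => (p.1.2, p.1.1))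
    (fun p _ => Finset.mem_filter.2 ⟨Finset.mem_univ _, p.2⟩)
    (fun p _ q _ h => ?_) (fun x hx => ?_) (fun p _ => rfl)
  · have h1 : p.1.2 = q.1.2 := congrArg Prod.fst h
    have h2 : p.1.1 = q.1.1 := congrArg Prod.snd h
    exact Subtype.ext (Prod.ext h2 h1)
  · refine ⟨⟨(x.2, x.1), (Finset.mem_filter.1 hx).2⟩, Finset.mem_univ _, ?_⟩
    exact Prod.mk.eta

lemma filterP_disj :
    Disjoint
      (Finset.univ.filter
        (fun x : Fin n × Fin n => (x.1 : ℕ) < (x.2 : ℕ) ∧ ¬ sameBlk c m (x.1 : ℕ) (x.2 : ℕ)))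
      (Finset.univ.filter
        (fun x : Fin n × Fin n => (x.2 : ℕ) < (x.1 : ℕ) ∧ ¬ sameBlk c m (x.2 : ℕ) (x.1 : ℕ))) := by
  refine Finset.disjoint_left.2 fun x hx hx' => ?_
  have h1 := (Finset.mem_filter.1 hx).2.1
  have h2 := (Finset.mem_filter.1 hx').2.1
  omega

lemma two_mul_sum_le_f2 (X : Matrix (Fin n) (Fin n) ℝ) (hX : X.transpose = X) :
    2 * ∑ p : OffI n m c, X p.1.1 p.1.2 ^ 2 ≤ ∑ s : Fin n, ∑ t : Fin n, X s t ^ 2 := by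
  have hsymm : ∀ a b : Fin n, X b a = X a b := fun a b => by
    rw [← Matrix.transpose_apply X a b, hX]
  have hA : ∑ p : OffI n m c, X p.1.1 p.1.2 ^ 2
      = ∑ x ∈ Finset.univ.filter
          (fun x : Fin n × Fin n => (x.1 : ℕ) < (x.2 : ℕ) ∧ ¬ sameBlk c m (x.1 : ℕ) (x.2 : ℕ)),
        X x.1 x.2 ^ 2 := sum_offI_eq_filter (fun x => X x.1 x.2 ^ 2)
  have hB : ∑ p : OffI n m c, X p.1.1 p.1.2 ^ 2
      = ∑ x ∈ Finset.univ.filter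
          (fun x : Fin n × Fin n => (x.2 : ℕ) < (x.1 : ℕ) ∧ ¬ sameBlk c m (x.2 : ℕ) (x.1 : ℕ)),
        X x.1 x.2 ^ 2 := by
    rw [← sum_offI_eq_filter_swap (c := c) (fun x : Fin n × Fin n => X x.1 x.2 ^ 2)]
    exact Finset.sum_congr rfl fun p _ => by rw [hsymm]
  have hunion : ∑ x ∈ (Finset.univ.filter
          (fun x : Fin n × Fin n => (x.1 : ℕ) < (x.2 : ℕ) ∧ ¬ sameBlk c m (x.1 : ℕ) (x.2 : ℕ)))
        ∪ (Finset.univ.filter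
          (fun x : Fin n × Fin n => (x.2 : ℕ) < (x.1 : ℕ) ∧ ¬ sameBlk c m (x.2 : ℕ) (x.1 : ℕ))),
        X x.1 x.2 ^ 2 ≤ ∑ x : Fin n × Fin n, X x.1 x.2 ^ 2 :=
    Finset.sum_le_sum_of_subset_of_nonneg (Finset.subset_univ _)
      (fun x _ _ => sq_nonneg _)
  rw [Finset.sum_union filterP_disj] at hunion
  calc 2 * ∑ p : OffI n m c, X p.1.1 p.1.2 ^ 2
      = (∑ p : OffI n m c, X p.1.1 p.1.2 ^ 2) + ∑ p : OffI n m c, X p.1.1 p.1.2 ^ 2 := by ring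
    _ ≤ ∑ x : Fin n × Fin n, X x.1 x.2 ^ 2 := by
        nth_rewrite 2 [hB]
        rw [hA]
        exact hunion
    _ = ∑ s : Fin n, ∑ t : Fin n, X s t ^ 2 :=
        Fintype.sum_prod_type (fun x : Fin n × Fin n => X x.1 x.2 ^ 2)

lemma f2_symOf (a : OffI n m c → ℝ) :
    ∑ s : Fin n, ∑ t : Fin n, symOf a s t ^ 2 = 2 * ∑ q : OffI n m c, a q ^ 2 := by
  have hsplit : ∑ x : Fin n × Fin n, symOf a x.1 x.2 ^ 2
      = (∑ x ∈ Finset.univ.filter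
          (fun x : Fin n × Fin n => (x.1 : ℕ) < (x.2 : ℕ) ∧ ¬ sameBlk c m (x.1 : ℕ) (x.2 : ℕ)),
          symOf a x.1 x.2 ^ 2)
        + ∑ x ∈ Finset.univ.filter
          (fun x : Fin n × Fin n => (x.2 : ℕ) < (x.1 : ℕ) ∧ ¬ sameBlk c m (x.2 : ℕ) (x.1 : ℕ)),
          symOf a x.1 x.2 ^ 2 := by
    rw [← Finset.sum_filter_add_sum_filter_not Finset.univ
      (fun x : Fin n × Fin n =>
        ((x.1 : ℕ) < (x.2 : ℕ) ∧ ¬ sameBlk c m (x.1 : ℕ) (x.2 : ℕ)) ∨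
        ((x.2 : ℕ) < (x.1 : ℕ) ∧ ¬ sameBlk c m (x.2 : ℕ) (x.1 : ℕ)))
      (fun x => symOf a x.1 x.2 ^ 2)]
    have hz : ∑ x ∈ Finset.univ.filter (fun x : Fin n × Fin n =>
        ¬ (((x.1 : ℕ) < (x.2 : ℕ) ∧ ¬ sameBlk c m (x.1 : ℕ) (x.2 : ℕ)) ∨
          ((x.2 : ℕ) < (x.1 : ℕ) ∧ ¬ sameBlk c m (x.2 : ℕ) (x.1 : ℕ)))),
        symOf a x.1 x.2 ^ 2 = 0 := by
      refine Finset.sum_eq_zero fun x hx => ?_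
      rw [symOf_eq_zero a (Finset.mem_filter.1 hx).2]
      norm_num
    rw [hz, add_zero]
    have hun : Finset.univ.filter (fun x : Fin n × Fin n =>
        ((x.1 : ℕ) < (x.2 : ℕ) ∧ ¬ sameBlk c m (x.1 : ℕ) (x.2 : ℕ)) ∨
        ((x.2 : ℕ) < (x.1 : ℕ) ∧ ¬ sameBlk c m (x.2 : ℕ) (x.1 : ℕ)))
        = (Finset.univ.filter
          (fun x : Fin n × Fin n => (x.1 : ℕ) < (x.2 : ℕ) ∧ ¬ sameBlk c m (x.1 : ℕ) (x.2 : ℕ)))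
        ∪ (Finset.univ.filter
          (fun x : Fin n × Fin n =>
            (x.2 : ℕ) < (x.1 : ℕ) ∧ ¬ sameBlk c m (x.2 : ℕ) (x.1 : ℕ))) := by
      ext x
      simp only [Finset.mem_filter, Finset.mem_union, Finset.mem_univ, true_and]
    rw [hun, Finset.sum_union filterP_disj]
  have hA : ∑ x ∈ Finset.univ.filter
      (fun x : Fin n × Fin n => (x.1 : ℕ) < (x.2 : ℕ) ∧ ¬ sameBlk c m (x.1 : ℕ) (x.2 : ℕ)),
      symOf a x.1 x.2 ^ 2 = ∑ q : OffI n m c, a q ^ 2 := by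
    rw [← sum_offI_eq_filter (fun x : Fin n × Fin n => symOf a x.1 x.2 ^ 2)]
    exact Finset.sum_congr rfl fun p _ => by rw [symOf_apply_fst]
  have hB : ∑ x ∈ Finset.univ.filter
      (fun x : Fin n × Fin n => (x.2 : ℕ) < (x.1 : ℕ) ∧ ¬ sameBlk c m (x.2 : ℕ) (x.1 : ℕ)),
      symOf a x.1 x.2 ^ 2 = ∑ q : OffI n m c, a q ^ 2 := by
    rw [← sum_offI_eq_filter_swap (fun x : Fin n × Fin n => symOf a x.1 x.2 ^ 2)]
    exact Finset.sum_congr rfl fun p _ => by rw [symOf_apply_snd]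
  have hprod : ∑ s : Fin n, ∑ t : Fin n, symOf a s t ^ 2
      = ∑ x : Fin n × Fin n, symOf a x.1 x.2 ^ 2 :=
      (Fintype.sum_prod_type (fun x : Fin n × Fin n => symOf a x.1 x.2 ^ 2)).symm
  rw [hprod, hsplit, hA, hB]
  ring

lemma nij_transpose (i j : ℕ) (M : Matrix (Fin n) (Fin n) ℝ) :
    (nij c i j M).transpose = nij c i j M.transpose := by
  ext s t
  rw [Matrix.transpose_apply, nij_apply, nij_apply, Matrix.transpose_apply]
  exact if_congr and_comm rfl rfl

lemma enorm_annih_mulVec_le {i j : ℕ} {U : Matrix (Fin n) (Fin n) ℝ} (hO : Orth U)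
    (a : OffI n m c → ℝ) :
    enorm ((annih n m c i j U).mulVec a) ≤ enorm a := by
  rw [mulVec_annih]
  apply enorm_le_of_sq_le
  set X : Matrix (Fin n) (Fin n) ℝ := nij c i j (U.transpose * symOf a * U) with hXdef
  have hXsym : X.transpose = X := by
    rw [hXdef, nij_transpose]
    rw [Matrix.transpose_mul, Matrix.transpose_mul, Matrix.transpose_transpose,
      symOf_transpose, mul_assoc]
  have h1 : 2 * ∑ p : OffI n m c, X p.1.1 p.1.2 ^ 2
      ≤ ∑ s : Fin n, ∑ t : Fin n, X s t ^ 2 := two_mul_sum_le_f2 X hXsym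
  have h2 : ∑ s : Fin n, ∑ t : Fin n, X s t ^ 2
      ≤ ∑ s : Fin n, ∑ t : Fin n, (U.transpose * symOf a * U) s t ^ 2 := by
    refine Finset.sum_le_sum fun s _ => Finset.sum_le_sum fun t _ => ?_
    rw [hXdef, nij_apply]
    split_ifs
    · simpa using sq_nonneg _
    · exact le_refl _
  have h3 : ∑ s : Fin n, ∑ t : Fin n, (U.transpose * symOf a * U) s t ^ 2
      = ∑ s : Fin n, ∑ t : Fin n, symOf a s t ^ 2 := f2_conj hO _
  have h4 := f2_symOf a
  linarith

lemma specNorm_annih_le_one {i j : ℕ} {U : Matrix (Fin n) (Fin n) ℝ} (hO : Orth U) :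
    specNorm (annih n m c i j U) ≤ 1 := by
  refine specNorm_le _ zero_le_one fun x hx => ?_
  calc enorm ((annih n m c i j U).mulVec x) ≤ enorm x := enorm_annih_mulVec_le hO x
    _ = 1 := hx

lemma specNorm_le_one_of_memUBC {ρ : ℝ} {i j : ℕ} {R : Matrix (OffI n m c) (OffI n m c) ℝ}
    (h : R ∈ IijUBC n m c ρ i j) : specNorm R ≤ 1 := by
  obtain ⟨U, hU, rfl⟩ := h
  exact specNorm_annih_le_one hU.2.1

end Aux3

section Aux4

variable {n m : ℕ} {c : ℕ → ℕ}

/-- zero out all diagonal and same-block entries. -/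
def zred (c : ℕ → ℕ) (m : ℕ) (M : Matrix (Fin n) (Fin n) ℝ) : Matrix (Fin n) (Fin n) ℝ :=
  fun s t => if (s : ℕ) = (t : ℕ) ∨ sameBlk c m (s : ℕ) (t : ℕ) then 0 else M s t

lemma zred_apply (M : Matrix (Fin n) (Fin n) ℝ) (s t : Fin n) :
    zred c m M s t = if (s : ℕ) = (t : ℕ) ∨ sameBlk c m (s : ℕ) (t : ℕ) then 0 else M s t := rfl

lemma zred_off (M : Matrix (Fin n) (Fin n) ℝ) (p : OffI n m c) :
    zred c m M p.1.1 p.1.2 = M p.1.1 p.1.2 := by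
  rw [zred_apply, if_neg]
  rintro (h | h)
  · exact absurd h (Nat.ne_of_lt p.2.1)
  · exact p.2.2 h

lemma symOf_vv {M : Matrix (Fin n) (Fin n) ℝ} (hM : ∀ s t, M t s = M s t) :
    symOf (fun q : OffI n m c => M q.1.1 q.1.2) = zred c m M := by
  funext s t
  rw [zred_apply]
  by_cases h : (s : ℕ) < (t : ℕ) ∧ ¬ sameBlk c m (s : ℕ) (t : ℕ)
  · rw [symOf, dif_pos h, if_neg]
    rintro (hc | hc)
    · omega
    · exact h.2 hc
  · by_cases h' : (t : ℕ) < (s : ℕ) ∧ ¬ sameBlk c m (t : ℕ) (s : ℕ)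
    · rw [symOf, dif_neg h, dif_pos h', if_neg]
      · exact hM s t
      rintro (hc | hc)
      · omega
      · exact h'.2 (sameBlk_symm hc)
    · rw [symOf_eq_zero _ (by tauto), if_pos]
      by_cases hd : (s : ℕ) = (t : ℕ)
      · exact Or.inl hd
      · refine Or.inr ?_
        by_contra hsb
        rcases Nat.lt_or_ge (s : ℕ) (t : ℕ) with hlt | hge
        · exact h ⟨hlt, hsb⟩
        · have hlt' : (t : ℕ) < (s : ℕ) := by omega
          exact h' ⟨hlt', fun hc => hsb (sameBlk_symm hc)⟩

lemma elem_right {i j : ℕ} {U : Matrix (Fin n) (Fin n) ℝ} (hE : IsElem c i j U)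
    {s : Fin n} (hs : ¬ inPiv c i j (s : ℕ)) (a : Fin n) :
    U a s = if a = s then 1 else 0 := hE a s fun h => hs h.2

lemma elem_left {i j : ℕ} {U : Matrix (Fin n) (Fin n) ℝ} (hE : IsElem c i j U)
    {a : Fin n} (ha : ¬ inPiv c i j (a : ℕ)) (s : Fin n) :
    U a s = if a = s then 1 else 0 := hE a s fun h => ha h.1

lemma inPiv_of_sameBlk {i j a b : ℕ} (h : sameBlk c m a b) (ha : inPiv c i j a) :
    inPiv c i j b := by
  obtain ⟨r, _, h1, h2⟩ := h
  rcases ha with h' | h'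
  · rcases eq_or_ne r i with rfl | hne
    · exact Or.inl h2
    · exact absurd (inBlk_disj hne h1 h') (fun f => f)
  · rcases eq_or_ne r j with rfl | hne
    · exact Or.inr h2
    · exact absurd (inBlk_disj hne h1 h') (fun f => f)

lemma conj_apply (U M : Matrix (Fin n) (Fin n) ℝ) (s t : Fin n) :
    (U.transpose * M * U) s t = ∑ a : Fin n, ∑ b : Fin n, U a s * M a b * U b t := by
  calc (U.transpose * M * U) s t = ∑ b, (U.transpose * M) s b * U b t := Matrix.mul_apply
    _ = ∑ b, ∑ a, U a s * M a b * U b t := by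
        refine Finset.sum_congr rfl fun b _ => ?_
        rw [Matrix.mul_apply, Finset.sum_mul]
        exact Finset.sum_congr rfl fun a _ => by rw [Matrix.transpose_apply]
    _ = ∑ a, ∑ b, U a s * M a b * U b t := Finset.sum_comm

/-- conjugation by an elementary matrix commutes with `nij` on a disjoint pivot zone. -/
lemma conj_nij_comm {i j k l : ℕ} {U : Matrix (Fin n) (Fin n) ℝ} (hE : IsElem c i j U)
    (hd : ∀ t : ℕ, inPiv c i j t → inPiv c k l t → False)
    (M : Matrix (Fin n) (Fin n) ℝ) :
    U.transpose * nij c k l M * U = nij c k l (U.transpose * M * U) := by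
  ext s t
  rw [conj_apply, nij_apply]
  by_cases hst : inPiv c k l (s : ℕ) ∧ inPiv c k l (t : ℕ)
  · rw [if_pos hst]
    have hs' : ¬ inPiv c i j (s : ℕ) := fun h => hd s h hst.1
    have ht' : ¬ inPiv c i j (t : ℕ) := fun h => hd t h hst.2
    have hcol : ∀ a b : Fin n, U a s * nij c k l M a b * U b t
        = (if a = s then 1 else 0) * nij c k l M a b * (if b = t then 1 else 0) := by
      intro a b
      rw [elem_right hE hs' a, elem_right hE ht' b]
    rw [Finset.sum_congr rfl fun a _ => Finset.sum_congr rfl fun b _ => hcol a b]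
    rw [Finset.sum_eq_single s
      (fun a _ ha => Finset.sum_eq_zero fun b _ => by rw [if_neg ha]; ring)
      (fun h => absurd (Finset.mem_univ _) h)]
    rw [Finset.sum_eq_single t (fun b _ hb => by rw [if_neg hb]; ring)
      (fun h => absurd (Finset.mem_univ _) h)]
    rw [if_pos rfl, if_pos rfl, nij_apply, if_pos hst]
    ring
  · rw [if_neg hst, conj_apply]
    refine Finset.sum_congr rfl fun a _ => Finset.sum_congr rfl fun b _ => ?_
    by_cases hab : inPiv c k l (a : ℕ) ∧ inPiv c k l (b : ℕ)
    · have ha' : ¬ inPiv c i j (a : ℕ) := fun h => hd a h hab.1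
      have hb' : ¬ inPiv c i j (b : ℕ) := fun h => hd b h hab.2
      rw [elem_left hE ha' s, elem_left hE hb' t]
      by_cases has : a = s
      · by_cases hbt : b = t
        · exact absurd ⟨has ▸ hab.1, hbt ▸ hab.2⟩ hst
        · rw [if_neg hbt]; ring
      · rw [if_neg has]; ring
    · rw [nij_apply, if_neg hab]

/-- elementary matrices with disjoint pivot zones commute. -/
lemma elem_mul_comm {i j k l : ℕ} {U V : Matrix (Fin n) (Fin n) ℝ}
    (hEU : IsElem c i j U) (hEV : IsElem c k l V)
    (hd : ∀ t : ℕ, inPiv c i j t → inPiv c k l t → False) :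
    U * V = V * U := by
  set A : Matrix (Fin n) (Fin n) ℝ := U - 1 with hA
  set B : Matrix (Fin n) (Fin n) ℝ := V - 1 with hB
  have hAsupp : ∀ s t : Fin n, ¬ (inPiv c i j (s : ℕ) ∧ inPiv c i j (t : ℕ)) → A s t = 0 := by
    intro s t h
    rw [hA, Matrix.sub_apply, hEU s t h, Matrix.one_apply]
    split_ifs <;> ring
  have hBsupp : ∀ s t : Fin n, ¬ (inPiv c k l (s : ℕ) ∧ inPiv c k l (t : ℕ)) → B s t = 0 := by
    intro s t h
    rw [hB, Matrix.sub_apply, hEV s t h, Matrix.one_apply]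
    split_ifs <;> ring
  have hAB : A * B = 0 := by
    ext s t
    rw [Matrix.mul_apply, Matrix.zero_apply]
    refine Finset.sum_eq_zero fun r _ => ?_
    by_cases hr : inPiv c i j (r : ℕ)
    · rw [hBsupp r t (fun h => hd r hr h.1), mul_zero]
    · rw [hAsupp s r (fun h => hr h.2), zero_mul]
  have hBA : B * A = 0 := by
    ext s t
    rw [Matrix.mul_apply, Matrix.zero_apply]
    refine Finset.sum_eq_zero fun r _ => ?_
    by_cases hr : inPiv c i j (r : ℕ)
    · rw [hBsupp s r (fun h => hd r hr h.2), zero_mul]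
    · rw [hAsupp r t (fun h => hr h.1), mul_zero]
  have hU : U = 1 + A := by rw [hA]; abel
  have hV : V = 1 + B := by rw [hB]; abel
  have expand : ∀ X Y : Matrix (Fin n) (Fin n) ℝ, (1 + X) * (1 + Y) = 1 + X + Y + X * Y := by
    intro X Y
    rw [add_mul, one_mul, mul_add, mul_one]
    abel
  rw [hU, hV, expand, expand, hAB, hBA, add_zero, add_zero]
  abel

lemma conj_conj_comm {U V : Matrix (Fin n) (Fin n) ℝ} (hcomm : U * V = V * U)
    (M : Matrix (Fin n) (Fin n) ℝ) :
    U.transpose * (V.transpose * M * V) * U = V.transpose * (U.transpose * M * U) * V := by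
  have h1 : V.transpose * U.transpose = U.transpose * V.transpose := by
    rw [← Matrix.transpose_mul, ← Matrix.transpose_mul, hcomm]
  have h2 : ∀ X : Matrix (Fin n) (Fin n) ℝ, X * V * U = X * U * V := fun X => by
    rw [mul_assoc, mul_assoc, ← hcomm]
  simp only [← mul_assoc]
  rw [h1, h2]

lemma nij_nij_comm (i j k l : ℕ) (M : Matrix (Fin n) (Fin n) ℝ) :
    nij c i j (nij c k l M) = nij c k l (nij c i j M) := by
  ext s t
  simp only [nij_apply]
  split_ifs <;> rfl

/-- key absorption: a matrix supported on the diagonal/same-block zone is annihilated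
by `zred ∘ nij ∘ conj`. -/
lemma zred_nij_conj_zero {i j : ℕ} {U : Matrix (Fin n) (Fin n) ℝ} (hE : IsElem c i j U)
    {D : Matrix (Fin n) (Fin n) ℝ}
    (hD : ∀ s t : Fin n, ¬ ((s : ℕ) = (t : ℕ) ∨ sameBlk c m (s : ℕ) (t : ℕ)) → D s t = 0) :
    zred c m (nij c i j (U.transpose * D * U)) = 0 := by
  ext s t
  rw [Matrix.zero_apply, zred_apply]
  by_cases hz : (s : ℕ) = (t : ℕ) ∨ sameBlk c m (s : ℕ) (t : ℕ)
  · rw [if_pos hz]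
  rw [if_neg hz, nij_apply]
  by_cases hp : inPiv c i j (s : ℕ) ∧ inPiv c i j (t : ℕ)
  · rw [if_pos hp]
  rw [if_neg hp, conj_apply]
  refine Finset.sum_eq_zero fun a _ => Finset.sum_eq_zero fun b _ => ?_
  by_cases hDab : D a b = 0
  · rw [hDab]; ring
  have hsup : (a : ℕ) = (b : ℕ) ∨ sameBlk c m (a : ℕ) (b : ℕ) := by
    by_contra hc
    exact hDab (hD a b hc)
  by_cases ha : inPiv c i j (a : ℕ) <;> by_cases hb : inPiv c i j (b : ℕ)
  · -- both pivot: need s or t outside pivot; corresponding factor vanishes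
    rcases not_and_or.1 hp with hs' | ht'
    · rw [elem_right hE hs' a, if_neg (fun hc : a = s => hs' (hc ▸ ha))]
      ring
    · rw [elem_right hE ht' b, if_neg (fun hc : b = t => ht' (hc ▸ hb))]
      ring
  · -- a pivot, b not: impossible given support
    exfalso
    rcases hsup with hab | hab
    · have hab' : a = b := Fin.ext hab
      exact hb (hab' ▸ ha)
    · exact hb (inPiv_of_sameBlk hab ha)
  · exfalso
    rcases hsup with hab | hab
    · have hab' : a = b := Fin.ext hab
      exact ha (hab'.symm ▸ hb)
    · exact ha (inPiv_of_sameBlk (by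
        obtain ⟨r, hr, h1, h2⟩ := hab
        exact ⟨r, hr, h2, h1⟩) hb)
  · -- neither pivot : collapse to position (s,t), excluded by hz
    rw [elem_left hE ha s, elem_left hE hb t]
    by_cases has : a = s
    · by_cases hbt : b = t
      · exfalso
        subst has
        subst hbt
        exact hz hsup
      · rw [if_neg hbt]; ring
    · rw [if_neg has]; ring

lemma nij_sub (i j : ℕ) (M N : Matrix (Fin n) (Fin n) ℝ) :
    nij c i j (M - N) = nij c i j M - nij c i j N := by
  ext s t
  rw [Matrix.sub_apply, nij_apply, nij_apply, nij_apply, Matrix.sub_apply]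
  split_ifs <;> ring

lemma zred_sub (M N : Matrix (Fin n) (Fin n) ℝ) :
    zred c m (M - N) = zred c m M - zred c m N := by
  ext s t
  rw [Matrix.sub_apply, zred_apply, zred_apply, zred_apply, Matrix.sub_apply]
  split_ifs <;> ring

/-- dropping the middle `zred` does not change `zred ∘ nij ∘ conj`. -/
lemma zred_nij_conj_zred {i j : ℕ} {U : Matrix (Fin n) (Fin n) ℝ} (hE : IsElem c i j U)
    (Y : Matrix (Fin n) (Fin n) ℝ) :
    zred c m (nij c i j (U.transpose * zred c m Y * U))
      = zred c m (nij c i j (U.transpose * Y * U)) := by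
  have hDsupp : ∀ s t : Fin n, ¬ ((s : ℕ) = (t : ℕ) ∨ sameBlk c m (s : ℕ) (t : ℕ)) →
      (Y - zred c m Y) s t = 0 := by
    intro s t h
    rw [Matrix.sub_apply, zred_apply, if_neg h, sub_self]
  have hzero := zred_nij_conj_zero (m := m) hE hDsupp
  have hsplit : U.transpose * Y * U
      = U.transpose * zred c m Y * U + U.transpose * (Y - zred c m Y) * U := by
    rw [← Matrix.add_mul, ← Matrix.mul_add]
    congr 1
    congr 1
    abel
  rw [hsplit]
  have hnija : nij c i j (U.transpose * zred c m Y * U + U.transpose * (Y - zred c m Y) * U)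
      = nij c i j (U.transpose * zred c m Y * U) + nij c i j (U.transpose * (Y - zred c m Y) * U) := by
    ext s t
    rw [Matrix.add_apply, nij_apply, nij_apply, nij_apply, Matrix.add_apply]
    split_ifs <;> ring
  have hzra : ∀ P Q : Matrix (Fin n) (Fin n) ℝ, zred c m (P + Q) = zred c m P + zred c m Q := by
    intro P Q
    ext s t
    rw [Matrix.add_apply, zred_apply, zred_apply, zred_apply, Matrix.add_apply]
    split_ifs <;> ring
  rw [hnija, hzra, hzero, add_zero]

/-- symmetry of `nij (Vᵀ (symOf a) V)`. -/
lemma nij_conj_symOf_symm {k l : ℕ} (V : Matrix (Fin n) (Fin n) ℝ) (a : OffI n m c → ℝ)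
    (s t : Fin n) :
    nij c k l (V.transpose * symOf a * V) t s = nij c k l (V.transpose * symOf a * V) s t := by
  have hsym : (V.transpose * symOf a * V).transpose = V.transpose * symOf a * V := by
    rw [Matrix.transpose_mul, Matrix.transpose_mul, Matrix.transpose_transpose,
      symOf_transpose, mul_assoc]
  have := congrFun (congrFun (nij_transpose (c := c) k l (V.transpose * symOf a * V)) s) t
  rw [hsym] at this
  calc nij c k l (V.transpose * symOf a * V) t s
      = (nij c k l (V.transpose * symOf a * V)).transpose s t := rfl
    _ = nij c k l (V.transpose * symOf a * V) s t := by rw [this]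

/-- THE commutation lemma: annihilators with disjoint pivot pairs commute. -/
lemma annih_comm {i j k l : ℕ} {U V : Matrix (Fin n) (Fin n) ℝ}
    (hEU : IsElem c i j U) (hEV : IsElem c k l V)
    (hd : ∀ t : ℕ, inPiv c i j t → inPiv c k l t → False) :
    annih n m c i j U * annih n m c k l V = annih n m c k l V * annih n m c i j U := by
  have hd' : ∀ t : ℕ, inPiv c k l t → inPiv c i j t → False := fun t h h' => hd t h' h
  -- matrix equality via mulVec on every vector
  have key : ∀ a : OffI n m c → ℝ,
      (annih n m c i j U * annih n m c k l V).mulVec a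
        = (annih n m c k l V * annih n m c i j U).mulVec a := by
    intro a
    rw [← Matrix.mulVec_mulVec, ← Matrix.mulVec_mulVec, mulVec_annih, mulVec_annih,
      mulVec_annih, mulVec_annih]
    have hUside : symOf (fun p : OffI n m c => nij c k l (V.transpose * symOf a * V) p.1.1 p.1.2)
        = zred c m (nij c k l (V.transpose * symOf a * V)) :=
      symOf_vv (nij_conj_symOf_symm V a)
    have hVside : symOf (fun p : OffI n m c => nij c i j (U.transpose * symOf a * U) p.1.1 p.1.2)
        = zred c m (nij c i j (U.transpose * symOf a * U)) :=
      symOf_vv (nij_conj_symOf_symm U a)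
    rw [hUside, hVside]
    have hmat : zred c m (nij c i j
          (U.transpose * zred c m (nij c k l (V.transpose * symOf a * V)) * U))
        = zred c m (nij c k l
          (V.transpose * zred c m (nij c i j (U.transpose * symOf a * U)) * V)) := by
      rw [zred_nij_conj_zred hEU, zred_nij_conj_zred hEV]
      refine congrArg (zred c m) ?_
      calc nij c i j (U.transpose * nij c k l (V.transpose * symOf a * V) * U)
          = nij c i j (nij c k l (U.transpose * (V.transpose * symOf a * V) * U)) := by
            rw [conj_nij_comm hEU hd]
        _ = nij c k l (nij c i j (U.transpose * (V.transpose * symOf a * V) * U)) :=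
            nij_nij_comm i j k l _
        _ = nij c k l (nij c i j (V.transpose * (U.transpose * symOf a * U) * V)) := by
            rw [conj_conj_comm (elem_mul_comm hEU hEV hd)]
        _ = nij c k l (V.transpose * nij c i j (U.transpose * symOf a * U) * V) := by
            rw [conj_nij_comm hEV hd']
    funext p
    rw [← zred_off (nij c i j
        (U.transpose * zred c m (nij c k l (V.transpose * symOf a * V)) * U)) p,
      ← zred_off (nij c k l
        (V.transpose * zred c m (nij c i j (U.transpose * symOf a * U)) * V)) p, hmat]
  ext p q
  have := congrFun (key (Pi.single q 1)) p
  simpa [Matrix.mulVec_single] using this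

end Aux4

section Aux5

variable {n m : ℕ} {c : ℕ → ℕ} {ρ : ℝ}

/-- membership in `J_L^{UBC}` phrased via `Forall₂`. -/
def JopL (n m : ℕ) (c : ℕ → ℕ) (ρ : ℝ) (L : List (ℕ × ℕ))
    (J : Matrix (OffI n m c) (OffI n m c) ℝ) : Prop :=
  ∃ Rs : List (Matrix (OffI n m c) (OffI n m c) ℝ),
    List.Forall₂ (fun p R => R ∈ IijUBC n m c ρ p.1 p.2) L Rs ∧ J = Rs.reverse.prod

lemma mem_JopUBC_iff {L : List (ℕ × ℕ)} {J : Matrix (OffI n m c) (OffI n m c) ℝ} :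
    J ∈ JopUBC n m c ρ L ↔ JopL n m c ρ L J := by
  constructor
  · rintro ⟨R, hR, rfl⟩
    refine ⟨(List.range L.length).map R, ?_, ?_⟩
    · rw [List.forall₂_iff_get]
      refine ⟨by simp, fun i h₁ h₂ => ?_⟩
      have : ((List.range L.length).map R).get ⟨i, h₂⟩ = R i := by
        simp
      rw [this]
      exact hR i h₁
    · rw [← List.map_reverse]
  · rintro ⟨Rs, hF, rfl⟩
    have hlen : L.length = Rs.length := hF.length_eq
    refine ⟨fun k => if h : k < Rs.length then Rs.get ⟨k, h⟩ else 1, fun k hk => ?_, ?_⟩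
    · have hk' : k < Rs.length := hlen ▸ hk
      have := (List.forall₂_iff_get.1 hF).2 k hk hk'
      simpa [dif_pos hk'] using this
    · have hmap : (List.range L.length).map
          (fun k => if h : k < Rs.length then Rs.get ⟨k, h⟩ else 1) = Rs := by
        refine List.ext_get (by simp [hlen]) fun i h₁ h₂ => ?_
        have hi : i < Rs.length := by simpa using h₂
        simp [hi]
      have hrev : (List.range L.length).reverse.map
          (fun k => if h : k < Rs.length then Rs.get ⟨k, h⟩ else 1) = Rs.reverse := by
        rw [List.map_reverse, hmap]
      rw [hrev]

lemma forall₂_mem_right {α β : Type*} {R : α → β → Prop} {l : List α} {u : List β}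
    (hF : List.Forall₂ R l u) : ∀ b ∈ u, ∃ a, R a b := by
  induction hF with
  | nil => simp
  | cons h1 _ ih =>
      intro b hb
      rcases List.mem_cons.1 hb with rfl | hb
      · exact ⟨_, h1⟩
      · exact ih b hb

lemma JopL_specNorm_le_one {L : List (ℕ × ℕ)} {J : Matrix (OffI n m c) (OffI n m c) ℝ}
    (h : JopL n m c ρ L J) : specNorm J ≤ 1 := by
  obtain ⟨Rs, hF, rfl⟩ := h
  refine specNorm_prod_le_one fun R hR => ?_
  rw [List.mem_reverse] at hR
  obtain ⟨p, hp⟩ := forall₂_mem_right hF R hR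
  exact specNorm_le_one_of_memUBC hp

lemma forall₂_append_split {α β : Type*} {R : α → β → Prop} :
    ∀ {l₁ l₂ : List α} {u : List β}, List.Forall₂ R (l₁ ++ l₂) u →
      ∃ u₁ u₂, u = u₁ ++ u₂ ∧ List.Forall₂ R l₁ u₁ ∧ List.Forall₂ R l₂ u₂ := by
  intro l₁
  induction l₁ with
  | nil => exact fun h => ⟨[], _, rfl, List.Forall₂.nil, h⟩
  | cons a l₁ ih =>
      intro l₂ u h
      rw [List.cons_append, List.forall₂_cons_left_iff] at h
      obtain ⟨b, u', hab, h', rfl⟩ := h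
      obtain ⟨u₁, u₂, rfl, hF₁, hF₂⟩ := ih h'
      exact ⟨b :: u₁, u₂, rfl, List.Forall₂.cons hab hF₁, hF₂⟩

lemma JopL_append {l₁ l₂ : List (ℕ × ℕ)} {J : Matrix (OffI n m c) (OffI n m c) ℝ} :
    JopL n m c ρ (l₁ ++ l₂) J
      ↔ ∃ A B, JopL n m c ρ l₁ A ∧ JopL n m c ρ l₂ B ∧ J = B * A := by
  constructor
  · rintro ⟨Rs, hF, rfl⟩
    obtain ⟨u₁, u₂, rfl, hF₁, hF₂⟩ := forall₂_append_split hF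
    exact ⟨u₁.reverse.prod, u₂.reverse.prod, ⟨u₁, hF₁, rfl⟩, ⟨u₂, hF₂, rfl⟩,
      by rw [List.reverse_append, List.prod_append]⟩
  · rintro ⟨A, B, ⟨u₁, hF₁, rfl⟩, ⟨u₂, hF₂, rfl⟩, rfl⟩
    exact ⟨u₁ ++ u₂, List.rel_append hF₁ hF₂, by rw [List.reverse_append, List.prod_append]⟩

lemma prod_swap_mid {M : Type*} [Monoid M] (u₁ u₃ : List M) (x y : M) (hxy : x * y = y * x) :
    (u₁ ++ x :: y :: u₃).reverse.prod = (u₁ ++ y :: x :: u₃).reverse.prod := by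
  have e : ∀ z w : M, (u₁ ++ z :: w :: u₃).reverse.prod
      = u₃.reverse.prod * w * z * u₁.reverse.prod := by
    intro z w
    rw [List.reverse_append, List.prod_append, List.reverse_cons, List.reverse_cons,
      List.prod_append, List.prod_append, List.prod_singleton, List.prod_singleton]
  rw [e x y, e y x, mul_assoc u₃.reverse.prod y x, ← hxy, ← mul_assoc]

lemma JopL_adjswap {L L' : List (ℕ × ℕ)} (h : AdjSwapG id L L')
    {J : Matrix (OffI n m c) (OffI n m c) ℝ} (hJ : JopL n m c ρ L J) : JopL n m c ρ L' J := by
  obtain ⟨l₁, l₂, a, b, hdisj, rfl, rfl⟩ := h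
  obtain ⟨Rs, hF, rfl⟩ := hJ
  obtain ⟨u₁, u₂, rfl, hF₁, hF₂⟩ := forall₂_append_split hF
  rw [List.forall₂_cons_left_iff] at hF₂
  obtain ⟨Ra, u₂', hRa, hF₂', rfl⟩ := hF₂
  rw [List.forall₂_cons_left_iff] at hF₂'
  obtain ⟨Rb, u₃, hRb, hF₃, rfl⟩ := hF₂'
  have hdis : ∀ t : ℕ, inPiv c a.1 a.2 t → inPiv c b.1 b.2 t → False := by
    intro t h1 h2
    exact inPiv_disj (by simpa using hdisj) h1 h2
  have hcomm : Ra * Rb = Rb * Ra := by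
    obtain ⟨Ua, hUa, rfl⟩ := hRa
    obtain ⟨Ub, hUb, rfl⟩ := hRb
    exact annih_comm hUa.1 hUb.1 hdis
  refine ⟨u₁ ++ Rb :: Ra :: u₃, ?_, ?_⟩
  · exact List.rel_append hF₁ (List.Forall₂.cons hRb (List.Forall₂.cons hRa hF₃))
  · exact prod_swap_mid u₁ u₃ Ra Rb hcomm

lemma AdjSwapG_symm {α : Type*} {pr : α → ℕ × ℕ} {L L' : List α} (h : AdjSwapG pr L L') :
    AdjSwapG pr L' L := by
  obtain ⟨l₁, l₂, a, b, hdisj, h1, h2⟩ := h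
  exact ⟨l₁, l₂, b, a, by rw [Set.inter_comm] at hdisj; exact hdisj, h2, h1⟩

lemma JopL_pequiv {L L' : List (ℕ × ℕ)} (h : PEquivL L L')
    {J : Matrix (OffI n m c) (OffI n m c) ℝ} (hJ : JopL n m c ρ L J) : JopL n m c ρ L' J := by
  induction h with
  | refl => exact hJ
  | tail _ h2 ih => exact JopL_adjswap h2 ih

lemma JopL_pequiv' {L L' : List (ℕ × ℕ)} (h : PEquivL L L')
    {J : Matrix (OffI n m c) (OffI n m c) ℝ} (hJ : JopL n m c ρ L' J) : JopL n m c ρ L J := by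
  have hsymm : PEquivL L' L :=
    by haveI : Std.Symm (AdjSwapG (id : ℕ × ℕ → ℕ × ℕ)) := ⟨fun _ _ hs => AdjSwapG_symm hs⟩; exact Std.Symm.symm (r := Relation.ReflTransGen (AdjSwapG id)) _ _ h
  exact JopL_pequiv hsymm hJ

end Aux5

section Aux6

variable {n m : ℕ} {c : ℕ → ℕ} {ρ : ℝ}

lemma off_add_card_le (hpart : IsPartition n m c) {r : ℕ} (hr : r < m) :
    off c r + c r ≤ n := by
  have h1 : off c r + c r = ∑ k ∈ Finset.range (r + 1), c k := by
    rw [Finset.sum_range_succ, off]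
  rw [h1, ← hpart.2.2]
  exact Finset.sum_le_sum_of_subset (Finset.range_subset_range.2 (Nat.succ_le_of_lt hr))

lemma sigmaMinBlk_one (hpart : IsPartition n m c) {r : ℕ} (hr : r < m) :
    sigmaMinBlk (n := n) c r (1 : Matrix (Fin n) (Fin n) ℝ) = 1 := by
  have hcr : 1 ≤ c r := hpart.2.1 r hr
  have hlt : off c r < n := by
    have := off_add_card_le hpart hr
    omega
  set idx : Fin n := ⟨off c r, hlt⟩ with hidxdef
  have hidx : inBlk c r (idx : ℕ) := ⟨le_refl _, by simp [hidxdef]; omega⟩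
  set x₀ : Fin n → ℝ := Pi.single idx 1 with hx₀
  have hsupp : ∀ t : Fin n, ¬ inBlk c r (t : ℕ) → x₀ t = 0 := by
    intro t ht
    have hne : t ≠ idx := fun h => ht (h ▸ hidx)
    rw [hx₀]
    exact Pi.single_eq_of_ne hne 1
  have hen : enorm x₀ = 1 := by
    rw [enorm]
    have hsum : ∑ t, x₀ t ^ 2 = 1 := by
      rw [hx₀, Finset.sum_eq_single idx (fun b _ hb => by
          rw [Pi.single_eq_of_ne hb]; norm_num)
        (fun h => absurd (Finset.mem_univ _) h)]
      rw [Pi.single_eq_same]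
      norm_num
    rw [hsum, Real.sqrt_one]
  have htrunc : ∀ x : Fin n → ℝ, (∀ t : Fin n, ¬ inBlk c r (t : ℕ) → x t = 0) →
      (fun t : Fin n => if inBlk c r (t : ℕ)
        then (1 : Matrix (Fin n) (Fin n) ℝ).mulVec x t else 0) = x := by
    intro x hx
    funext t
    rw [Matrix.one_mulVec]
    by_cases h : inBlk c r (t : ℕ)
    · rw [if_pos h]
    · rw [if_neg h, hx t h]
  have hset : { v : ℝ | ∃ x : Fin n → ℝ,
      (∀ t : Fin n, ¬ inBlk c r (t : ℕ) → x t = 0) ∧ enorm x = 1 ∧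
      enorm (fun t : Fin n => if inBlk c r (t : ℕ)
        then (1 : Matrix (Fin n) (Fin n) ℝ).mulVec x t else 0) = v } = {1} := by
    ext v
    constructor
    · rintro ⟨x, hx, hx1, hv⟩
      rw [htrunc x hx, hx1] at hv
      exact hv ▸ rfl
    · rintro rfl
      exact ⟨x₀, hsupp, hen, by rw [htrunc x₀ hsupp, hen]⟩
  rw [sigmaMinBlk, hset, csInf_singleton]

lemma gammaUBC_le_one (hpart : IsPartition n m c) {i j : ℕ} (him : i < m) (hjm : j < m) :
    gammaUBC c i j ≤ 1 := by
  have hci : 1 ≤ c i := hpart.2.1 i him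
  have hcj : 1 ≤ c j := hpart.2.1 j hjm
  have h4 : (4 : ℝ) ≤ 4 ^ c i := by
    calc (4 : ℝ) = 4 ^ 1 := (pow_one 4).symm
      _ ≤ 4 ^ c i := pow_le_pow_right₀ (by norm_num) hci
  have hcj' : (1 : ℝ) ≤ (c j : ℝ) := by exact_mod_cast hcj
  have h9 : (9 : ℝ) ≤ ((4 : ℝ) ^ c i + 6 * (c j : ℝ) - 1) * ((c j : ℝ) + 1) := by nlinarith
  have hsq : (3 : ℝ) ≤ Real.sqrt (((4 : ℝ) ^ c i + 6 * (c j : ℝ) - 1) * ((c j : ℝ) + 1)) := by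
    have h3 : (3 : ℝ) = Real.sqrt 9 := by
      rw [show (9 : ℝ) = 3 ^ 2 by norm_num, Real.sqrt_sq (by norm_num)]
    rw [h3]
    exact Real.sqrt_le_sqrt h9
  rw [gammaUBC, div_le_one (lt_of_lt_of_le (by norm_num) hsq)]
  exact hsq

lemma gammaUBC_nonneg (i j : ℕ) : 0 ≤ gammaUBC c i j :=
  div_nonneg (by norm_num) (Real.sqrt_nonneg _)

lemma one_mem_IijUBC (hpart : IsPartition n m c) (hρ1 : ρ ≤ 1) (hρ0 : 0 < ρ)
    {i j : ℕ} (hij : i < j) (hjm : j < m) :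
    annih n m c i j (1 : Matrix (Fin n) (Fin n) ℝ) ∈ IijUBC n m c ρ i j := by
  refine ⟨1, ⟨fun s t _ => Matrix.one_apply, ?_, ?_, ?_⟩, rfl⟩
  · rw [Orth, Matrix.transpose_one, one_mul]
  · rw [sigmaMinBlk_one hpart (lt_trans hij hjm), sigmaMinBlk_one hpart hjm]
  · rw [sigmaMinBlk_one hpart (lt_trans hij hjm)]
    calc ρ * gammaUBC c i j ≤ 1 * 1 :=
        mul_le_mul hρ1 (gammaUBC_le_one hpart (lt_trans hij hjm) hjm)
          (gammaUBC_nonneg i j) zero_le_one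
      _ = 1 := mul_one 1

lemma mu_nonneg (hpart : IsPartition n m c) (hρ1 : ρ ≤ 1) (hρ0 : 0 < ρ)
    {L : List (ℕ × ℕ)} (hL : SeqOn m L) {μ : ℝ}
    (hμ : ∀ J ∈ JopUBC n m c ρ L, specNorm J ≤ μ) : 0 ≤ μ := by
  set Rs : List (Matrix (OffI n m c) (OffI n m c) ℝ)
    := L.map (fun p => annih n m c p.1 p.2 1) with hRs
  have hF : List.Forall₂ (fun p R => R ∈ IijUBC n m c ρ p.1 p.2) L Rs := by
    rw [hRs, List.forall₂_map_right_iff]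
    refine List.forall₂_same.2 fun p hp => ?_
    obtain ⟨h1, h2⟩ := hL.1 p hp
    exact one_mem_IijUBC hpart hρ1 hρ0 h1 h2
  have hmem : Rs.reverse.prod ∈ JopUBC n m c ρ L := mem_JopUBC_iff.2 ⟨Rs, hF, rfl⟩
  exact le_trans (specNorm_nonneg _) (hμ _ hmem)

lemma prod_range_succ_list {M : Type*} [Monoid M] (h : ℕ → M) (d : ℕ) :
    ((List.range (d + 1)).map h).prod = ((List.range d).map h).prod * h d := by
  rw [List.range_succ, List.map_append, List.prod_append]
  simp

lemma prod_interleave {M : Type*} [Monoid M] (f g : ℕ → M) (d : ℕ) :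
    ((List.range (d + 1)).map (fun k => f k * g k)).prod
      = f 0 * ((List.range d).map (fun k => g k * f (k + 1))).prod * g d := by
  induction d with
  | zero => simp [List.range_succ]
  | succ d ihd =>
      rw [prod_range_succ_list (fun k => f k * g k) (d + 1), ihd,
        prod_range_succ_list (fun k => g k * f (k + 1)) d]
      simp only [mul_assoc]

lemma chain_decomp :
    ∀ (r : ℕ) (cs : ℕ → List (ℕ × ℕ)) (s : Finset ℕ) (d : ℕ),
      s.card = d → (∀ k ∈ s, k < r) →
      (∀ k < r, if k ∈ s then ShiftEq (cs k) (cs (k + 1))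
        else PEquivL (cs k) (cs (k + 1))) →
      ∀ Js : ℕ → Matrix (OffI n m c) (OffI n m c) ℝ,
        (∀ k ≤ d, JopL n m c ρ (cs r) (Js k)) →
        ∃ A J B, specNorm A ≤ 1 ∧ specNorm B ≤ 1 ∧ JopL n m c ρ (cs 0) J ∧
          ((List.range (d + 1)).map Js).prod = A * J * B := by
  intro r
  induction r with
  | zero =>
      intro cs s d hcard hlt hcond Js hJs
      have hs : s = ∅ := Finset.eq_empty_of_forall_notMem
        fun k hk => Nat.not_lt_zero k (hlt k hk)
      rw [hs, Finset.card_empty] at hcard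
      subst hcard
      refine ⟨1, Js 0, 1, specNorm_one_le, specNorm_one_le, hJs 0 (le_refl 0), ?_⟩
      simp [List.range_succ]
  | succ r ih =>
      intro cs s d hcard hlt hcond Js hJs
      have hstep := hcond r (Nat.lt_succ_self r)
      by_cases hr : r ∈ s
      · -- shift step
        rw [if_pos hr] at hstep
        obtain ⟨l₁, l₂, hcr, hcr1⟩ := hstep
        have hd1 : 1 ≤ d := by
          rw [← hcard]
          exact Finset.card_pos.2 ⟨r, hr⟩
        have hsplitk : ∀ k, ∃ Y X, k ≤ d →
            (JopL n m c ρ l₁ Y ∧ JopL n m c ρ l₂ X ∧ Js k = Y * X) := by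
          intro k
          by_cases hk : k ≤ d
          · have hmem := hJs k hk
            rw [hcr1] at hmem
            obtain ⟨A2, B1, hA2, hB1, hprod⟩ := JopL_append.1 hmem
            exact ⟨B1, A2, fun _ => ⟨hB1, hA2, hprod⟩⟩
          · exact ⟨1, 1, fun hk' => absurd hk' hk⟩
        choose Y X hYX using hsplitk
        set e := d - 1 with he
        have hde : d = e + 1 := by omega
        set Js' : ℕ → Matrix (OffI n m c) (OffI n m c) ℝ
          := fun k => X k * Y (k + 1) with hJs'def
        have hJs'mem : ∀ k ≤ e, JopL n m c ρ (cs r) (Js' k) := by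
          intro k hk
          have hk1 : k ≤ d := by omega
          have hk2 : k + 1 ≤ d := by omega
          rw [hcr]
          exact JopL_append.2 ⟨Y (k + 1), X k, (hYX (k + 1) hk2).1, (hYX k hk1).2.1, rfl⟩
        have hcard' : (s.erase r).card = e := by
          rw [Finset.card_erase_of_mem hr, hcard]
        have hlt' : ∀ k ∈ s.erase r, k < r := by
          intro k hk
          have h1 := Finset.mem_erase.1 hk
          have h2 := hlt k h1.2
          omega
        have hcond' : ∀ k < r, if k ∈ s.erase r then ShiftEq (cs k) (cs (k + 1))
            else PEquivL (cs k) (cs (k + 1)) := by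
          intro k hk
          have h := hcond k (Nat.lt_succ_of_lt hk)
          have hne : k ≠ r := Nat.ne_of_lt hk
          by_cases hks : k ∈ s
          · rw [if_pos hks] at h
            rw [if_pos (Finset.mem_erase.2 ⟨hne, hks⟩)]
            exact h
          · rw [if_neg hks] at h
            rw [if_neg (fun hc => hks (Finset.mem_erase.1 hc).2)]
            exact h
        obtain ⟨A', J, B', hA', hB', hJ, hprod'⟩ :=
          ih cs (s.erase r) e hcard' hlt' hcond' Js' hJs'mem
        have hY0 : specNorm (Y 0) ≤ 1 := JopL_specNorm_le_one (hYX 0 (by omega)).1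
        have hXd : specNorm (X d) ≤ 1 := JopL_specNorm_le_one (hYX d (le_refl d)).2.1
        refine ⟨Y 0 * A', J, B' * X d, ?_, ?_, hJ, ?_⟩
        · calc specNorm (Y 0 * A') ≤ specNorm (Y 0) * specNorm A' := specNorm_mul_le _ _
            _ ≤ 1 * 1 := mul_le_mul hY0 hA' (specNorm_nonneg _) zero_le_one
            _ = 1 := one_mul 1
        · calc specNorm (B' * X d) ≤ specNorm B' * specNorm (X d) := specNorm_mul_le _ _
            _ ≤ 1 * 1 := mul_le_mul hB' hXd (specNorm_nonneg _) zero_le_one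
            _ = 1 := one_mul 1
        · have hcong : (List.range (d + 1)).map Js
              = (List.range (d + 1)).map (fun k => Y k * X k) := by
            refine List.map_congr_left fun k hk => ?_
            have hk' : k ≤ d := by
              have := List.mem_range.1 hk
              omega
            exact (hYX k hk').2.2
          have hmid : (List.range d).map (fun k => X k * Y (k + 1))
              = (List.range (e + 1)).map Js' := by
            rw [hde]
          calc ((List.range (d + 1)).map Js).prod
              = ((List.range (d + 1)).map (fun k => Y k * X k)).prod := by rw [hcong]
            _ = Y 0 * ((List.range d).map (fun k => X k * Y (k + 1))).prod * X d :=
              prod_interleave Y X d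
            _ = Y 0 * (A' * J * B') * X d := by rw [hmid, hprod']
            _ = (Y 0 * A') * J * (B' * X d) := by simp only [mul_assoc]
      · -- equivalence step
        rw [if_neg hr] at hstep
        have hJs2 : ∀ k ≤ d, JopL n m c ρ (cs r) (Js k) :=
          fun k hk => JopL_pequiv' hstep (hJs k hk)
        exact ih cs s d hcard
          (fun k hk => lt_of_le_of_ne (Nat.lt_succ_iff.1 (hlt k hk))
            (fun h => hr (h ▸ hk)))
          (fun k hk => hcond k (Nat.lt_succ_of_lt hk)) Js hJs2

end Aux6

/-- Proposition 2.16: if `O' ~w O` via a chain containing exactly `d`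
shift-equivalent adjacent pairs and `‖J‖₂ ≤ μ` for all `J ∈ J_O^{UBC_π(ρ)}`, then the
product of any `d+1` block Jacobi operators from `J_{O'}^{UBC_π(ρ)}` has spectral norm
at most `μ`. -/
theorem statement17 (n m : ℕ) (c : ℕ → ℕ) (hpart : IsPartition n m c)
    (ρ : ℝ) (hρ0 : 0 < ρ) (hρ1 : ρ ≤ 1)
    (L L' : List (ℕ × ℕ)) (hL : SeqOn m L) (hL' : SeqOn m L')
    (d : ℕ) (hchain : WeakChainD d L L')
    (μ : ℝ) (hμ : ∀ J ∈ JopUBC n m c ρ L, specNorm J ≤ μ) :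
    ∀ Js : ℕ → Matrix (OffI n m c) (OffI n m c) ℝ,
      (∀ k ≤ d, Js k ∈ JopUBC n m c ρ L') →
      specNorm (((List.range (d + 1)).map Js).prod) ≤ μ := by
  obtain ⟨r, cs, s, h0, hrL', hcard, hslt, hcond⟩ := hchain
  intro Js hJs
  have hμ0 : 0 ≤ μ := mu_nonneg hpart hρ1 hρ0 hL hμ
  have hJs' : ∀ k ≤ d, JopL n m c ρ (cs r) (Js k) := fun k hk => by
    rw [hrL']
    exact mem_JopUBC_iff.1 (hJs k hk)
  obtain ⟨A, J, B, hA, hB, hJ, hprod⟩ := chain_decomp r cs s d hcard hslt hcond Js hJs'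
  rw [h0] at hJ
  have hJμ : specNorm J ≤ μ := hμ J (mem_JopUBC_iff.2 hJ)
  rw [hprod]
  have h1 : specNorm (A * J) ≤ μ := by
    calc specNorm (A * J) ≤ specNorm A * specNorm J := specNorm_mul_le _ _
      _ ≤ 1 * μ := mul_le_mul hA hJμ (specNorm_nonneg _) zero_le_one
      _ = μ := one_mul μ
  calc specNorm (A * J * B) ≤ specNorm (A * J) * specNorm B := specNorm_mul_le _ _
    _ ≤ μ * 1 := mul_le_mul h1 hB (specNorm_nonneg _) hμ0
    _ = μ := mul_one μ
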